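/- In the even orthogonal character ring for n = 3: p̄_3 · oe_{(2,1)} = oe_{(5,1)} - oe_{(3,3)} - oe_{(2,2,2)} - oe_∅ + oe_{(2)}, where p̄_3 = Σ_{i=1}^3 (x_i^3 + x_i^{-3}). -/

import Mathlib

open scoped BigOperators

noncomputable section

/-- An integer partition: a weakly decreasing, eventually zero sequence of naturals. -/
structure IntPartition where
  part : ℕ → ℕ
  antitone : ∀ i j, i ≤ j → part j ≤ part i
  finite : ∃ N, ∀ i, N ≤ i → part i = 0

namespace IntPartition

instance : LE IntPartition := ⟨fun μ ν => ∀ i, μ.part i ≤ ν.part i⟩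

/-- The number of nonzero parts of a partition. -/
def len (μ : IntPartition) : ℕ :=
  Nat.find (p := fun N => μ.part N = 0)
    (by obtain ⟨N, hN⟩ := μ.finite; exact ⟨N, hN N le_rfl⟩)

/-- The size `|μ|` of a partition. -/
def size (μ : IntPartition) : ℕ := ∑ i ∈ Finset.range μ.len, μ.part i

/-- The number of boxes of the skew shape `ν/μ`. -/
def skewSize (ν μ : IntPartition) : ℕ := ν.size - μ.size

/-- One less than the number of nonempty rows of `ν/μ`. -/
def height (μ ν : IntPartition) : ℕ :=
  (((Finset.range ν.len).filter (fun i => μ.part i < ν.part i)).card) - 1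

/-- The set of boxes of the skew diagram `ν/μ` (rows and columns indexed from 0). -/
def cells (μ ν : IntPartition) : Set (ℕ × ℕ) :=
  {c | μ.part c.1 ≤ c.2 ∧ c.2 < ν.part c.1}

/-- Two boxes are adjacent if they share a common side. -/
def Adj (a b : ℕ × ℕ) : Prop :=
  (a.1 = b.1 ∧ (a.2 + 1 = b.2 ∨ b.2 + 1 = a.2)) ∨
  (a.2 = b.2 ∧ (a.1 + 1 = b.1 ∨ b.1 + 1 = a.1))

/-- A set of boxes is connected if any two of its boxes are joined by a path of
adjacent boxes within the set. -/
def ConnectedIn (S : Set (ℕ × ℕ)) : Prop :=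
  ∀ a ∈ S, ∀ b ∈ S,
    Relation.ReflTransGen (fun u v => u ∈ S ∧ v ∈ S ∧ Adj u v) a b

/-- `ν/μ` is a border strip with `r` boxes: connected and with no 2×2 block. -/
def IsBorderStrip (μ ν : IntPartition) (r : ℕ) : Prop :=
  μ ≤ ν ∧ skewSize ν μ = r ∧ ConnectedIn (cells μ ν) ∧
    ∀ i j : ℕ, ¬ ((i, j) ∈ cells μ ν ∧ (i + 1, j) ∈ cells μ ν ∧
      (i, j + 1) ∈ cells μ ν ∧ (i + 1, j + 1) ∈ cells μ ν)

/-- `ν/μ` is a vertical strip with `r` boxes (at most one box per row). -/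
def IsVerticalStrip (μ ν : IntPartition) (r : ℕ) : Prop :=
  μ ≤ ν ∧ skewSize ν μ = r ∧ ∀ i, ν.part i ≤ μ.part i + 1

/-- `ν/μ` is a horizontal strip with `r` boxes (at most one box per column). -/
def IsHorizontalStrip (μ ν : IntPartition) (r : ℕ) : Prop :=
  μ ≤ ν ∧ skewSize ν μ = r ∧ ∀ i, ν.part (i + 1) ≤ μ.part i

/-- The conjugate partition. -/
def conj (μ : IntPartition) : IntPartition where
  part j := ((Finset.range μ.len).filter (fun i => j < μ.part i)).card
  antitone := by
    intro i j hij
    apply Finset.card_le_card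
    intro a ha
    simp only [Finset.mem_filter] at ha ⊢
    exact ⟨ha.1, lt_of_le_of_lt hij ha.2⟩
  finite := ⟨μ.part 0, by
    intro j hj
    simp only [Finset.card_eq_zero, Finset.filter_eq_empty_iff]
    intro a _
    have := μ.antitone 0 a (Nat.zero_le a)
    omega⟩

end IntPartition
/-- The field of rational functions in `n` variables over `ℚ`. -/
abbrev K (n : ℕ) := FractionRing (MvPolynomial (Fin n) ℚ)

/-- The variables `x_i`. -/
def X {n : ℕ} (i : Fin n) : K n :=
  algebraMap (MvPolynomial (Fin n) ℚ) (K n) (MvPolynomial.X i)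

/-- `N_β = det(x_i^{β_j} + x_i^{-β_j})`. -/
def N (n : ℕ) (β : Fin n → ℤ) : K n :=
  Matrix.det (Matrix.of fun i j : Fin n => X i ^ (β j) + X i ^ (-(β j)))

/-- The even orthogonal character
`oe_λ = 2·det(x_i^{λ_j+n-j} + x_i^{-(λ_j+n-j)}) / ((1+δ_{λ_n,0})·det(x_i^{n-j} + x_i^{-(n-j)}))`
(zero when `λ` has more than `n` parts). -/
def oe (n : ℕ) (μ : IntPartition) : K n :=
  if μ.len ≤ n then
    (2 * N n (fun j => (μ.part j : ℤ) + ((n : ℤ) - 1 - (j : ℕ)))) /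
      ((if μ.part (n - 1) = 0 then 2 else 1) * N n (fun j => (n : ℤ) - 1 - (j : ℕ)))
  else 0

/-- `p̄_r = Σ_i (x_i^r + x_i^{-r})`. -/
def pbar (n r : ℕ) : K n := ∑ i : Fin n, (X i ^ (r : ℤ) + X i ^ (-(r : ℤ)))

/-- The partition `(a, b, c)` (with `a ≥ b ≥ c`). -/
def P3 (a b c : ℕ) (hab : b ≤ a) (hbc : c ≤ b) : IntPartition :=
  ⟨fun i => if i = 0 then a else if i = 1 then b else if i = 2 then c else 0,
    by intro i j h; (try dsimp only); split_ifs <;> omega,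
    ⟨3, by intro i h; (try dsimp only); split_ifs <;> omega⟩⟩

lemma hX {n : ℕ} (i : Fin n) : X i ≠ 0 := by
  simp only [X, ne_eq, map_eq_zero_iff _ (IsFractionRing.injective _ _)]
  exact MvPolynomial.X_ne_zero i

lemma hsub {n : ℕ} {i j : Fin n} (h : i ≠ j) : X i - X j ≠ 0 := by
  rw [X, X, ← map_sub, ne_eq, map_eq_zero_iff _ (IsFractionRing.injective _ _)]
  intro hc
  have := congrArg (MvPolynomial.eval (Pi.single i (1:ℚ))) hc
  simp [Pi.single_apply, h.symm] at this

lemma hmul {n : ℕ} (i j : Fin n) : X i * X j - 1 ≠ 0 := by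
  rw [X, X, ← map_mul, ← map_one (algebraMap (MvPolynomial (Fin n) ℚ) (K n)), ← map_sub,
    ne_eq, map_eq_zero_iff _ (IsFractionRing.injective _ _)]
  intro hc
  have := congrArg (MvPolynomial.eval (fun _ => (0:ℚ))) hc
  simp at this

lemma L {F : Type*} [Field F] {x : F} (hx : x ≠ 0) (a b : ℤ) :
    (x ^ a + x ^ (-a)) * x ^ b = x ^ (b + a) + x ^ (b - a) := by
  rw [add_mul, ← zpow_add₀ hx, ← zpow_add₀ hx]; ring_nf

set_option maxHeartbeats 2000000 in
lemma Nmul (β : Fin 3 → ℤ) :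
    N 3 β * (X 0 ^ (7:ℤ) * X 1 ^ (7:ℤ) * X 2 ^ (7:ℤ)) =
      (X 0 ^ ((7:ℤ) + β 0) + X 0 ^ ((7:ℤ) - β 0)) *
        (X 1 ^ ((7:ℤ) + β 1) + X 1 ^ ((7:ℤ) - β 1)) *
        (X 2 ^ ((7:ℤ) + β 2) + X 2 ^ ((7:ℤ) - β 2)) -
      (X 0 ^ ((7:ℤ) + β 0) + X 0 ^ ((7:ℤ) - β 0)) *
        (X 1 ^ ((7:ℤ) + β 2) + X 1 ^ ((7:ℤ) - β 2)) *
        (X 2 ^ ((7:ℤ) + β 1) + X 2 ^ ((7:ℤ) - β 1)) -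
      (X 0 ^ ((7:ℤ) + β 1) + X 0 ^ ((7:ℤ) - β 1)) *
        (X 1 ^ ((7:ℤ) + β 0) + X 1 ^ ((7:ℤ) - β 0)) *
        (X 2 ^ ((7:ℤ) + β 2) + X 2 ^ ((7:ℤ) - β 2)) +
      (X 0 ^ ((7:ℤ) + β 1) + X 0 ^ ((7:ℤ) - β 1)) *
        (X 1 ^ ((7:ℤ) + β 2) + X 1 ^ ((7:ℤ) - β 2)) *
        (X 2 ^ ((7:ℤ) + β 0) + X 2 ^ ((7:ℤ) - β 0)) +
      (X 0 ^ ((7:ℤ) + β 2) + X 0 ^ ((7:ℤ) - β 2)) *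
        (X 1 ^ ((7:ℤ) + β 0) + X 1 ^ ((7:ℤ) - β 0)) *
        (X 2 ^ ((7:ℤ) + β 1) + X 2 ^ ((7:ℤ) - β 1)) -
      (X 0 ^ ((7:ℤ) + β 2) + X 0 ^ ((7:ℤ) - β 2)) *
        (X 1 ^ ((7:ℤ) + β 1) + X 1 ^ ((7:ℤ) - β 1)) *
        (X 2 ^ ((7:ℤ) + β 0) + X 2 ^ ((7:ℤ) - β 0)) := by
  have L0 := L (hX (0 : Fin 3))
  have L1 := L (hX (1 : Fin 3))
  have L2 := L (hX (2 : Fin 3))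
  simp only [N, Matrix.det_fin_three, Matrix.of_apply, ← L0, ← L1, ← L2]
  ring

lemma P3_len_le (a b c : ℕ) (hab : b ≤ a) (hbc : c ≤ b) : (P3 a b c hab hbc).len ≤ 3 := by
  apply Nat.find_le
  simp [P3]

lemma oe_eq (a b c : ℕ) (hab : b ≤ a) (hbc : c ≤ b) (β : Fin 3 → ℤ)
    (h0 : β 0 = a + 2) (h1 : β 1 = b + 1) (h2 : β 2 = c) :
    oe 3 (P3 a b c hab hbc) =
      (2 * N 3 β) /
        ((if c = 0 then 2 else 1) * N 3 (fun j : Fin 3 => ((3:ℕ):ℤ) - 1 - (j:ℕ))) := by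
  unfold oe
  rw [if_pos (P3_len_le a b c hab hbc)]
  have hpart : (P3 a b c hab hbc).part (3 - 1) = c := by norm_num [P3]
  rw [hpart]
  congr 2
  congr 1
  funext j
  fin_cases j <;> simp [P3, h0, h1, h2] <;> push_cast <;> ring

set_option maxHeartbeats 2000000 in
set_option synthInstance.maxHeartbeats 1000000 in
lemma hdfac : N 3 (![2,1,0] : Fin 3 → ℤ) * (X 0 * X 1 * X 2)^2 =
    2 * (X 0 - X 1) * (X 0 * X 1 - 1) * (X 0 - X 2) * (X 0 * X 2 - 1) *
      (X 1 - X 2) * (X 1 * X 2 - 1) := by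
  have h := Nmul ![2,1,0]
  norm_num [Matrix.cons_val_zero, Matrix.cons_val_one, Matrix.head_cons,
    Matrix.cons_val_two, Matrix.tail_cons, zpow_ofNat] at h
  apply mul_right_cancel₀ (show (X 0*X 1*X 2)^5 ≠ 0 from
    pow_ne_zero _ (mul_ne_zero (mul_ne_zero (hX 0) (hX 1)) (hX 2)))
  calc N 3 (![2,1,0] : Fin 3 → ℤ) * (X 0 * X 1 * X 2)^2 * (X 0*X 1*X 2)^5
      = N 3 (![2,1,0] : Fin 3 → ℤ) * (X 0^7 * X 1^7 * X 2^7) := by ring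
    _ = 2 * (X 0 - X 1) * (X 0 * X 1 - 1) * (X 0 - X 2) * (X 0 * X 2 - 1) *
          (X 1 - X 2) * (X 1 * X 2 - 1) * (X 0*X 1*X 2)^5 := by rw [h]; ring

lemma hDne : N 3 (![2,1,0] : Fin 3 → ℤ) ≠ 0 := by
  intro h
  have := hdfac
  rw [h, zero_mul] at this
  have h01 : (0:Fin 3) ≠ 1 := by decide
  have h02 : (0:Fin 3) ≠ 2 := by decide
  have h12 : (1:Fin 3) ≠ 2 := by decide
  exact (mul_ne_zero (mul_ne_zero (mul_ne_zero (mul_ne_zero (mul_ne_zero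
    (mul_ne_zero (two_ne_zero) (hsub h01)) (hmul 0 1)) (hsub h02)) (hmul 0 2))
    (hsub h12)) (hmul 1 2)) this.symm

lemma denN : N 3 (fun j : Fin 3 => ((3:ℕ):ℤ) - 1 - (j:ℕ)) = N 3 (![2,1,0] : Fin 3 → ℤ) := by
  congr 1
  funext j
  fin_cases j <;> norm_num
set_option maxHeartbeats 4000000 in
set_option synthInstance.maxHeartbeats 1000000 in
lemma hp3 : pbar 3 3 * (X 0^3*X 1^3*X 2^3) =
    (X 0^6+1)*X 1^3*X 2^3 + X 0^3*((X 1^6+1)*X 2^3) + X 0^3*(X 1^3*(X 2^6+1)) := by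
  have e0 := L (hX (0:Fin 3)) 3 3
  have e1 := L (hX (1:Fin 3)) 3 3
  have e2 := L (hX (2:Fin 3)) 3 3
  norm_num [zpow_ofNat, zpow_neg] at e0 e1 e2
  simp only [pbar, Fin.sum_univ_three]
  norm_num [zpow_ofNat, zpow_neg]
  linear_combination (X 1^3*X 2^3) * e0 + (X 0^3*X 2^3) * e1 + (X 0^3*X 1^3) * e2

set_option maxHeartbeats 8000000 in
set_option synthInstance.maxHeartbeats 1000000 in
lemma key : pbar 3 3 * N 3 (![4,2,0] : Fin 3 → ℤ) =
    N 3 (![7,2,0] : Fin 3 → ℤ) - N 3 (![5,4,0] : Fin 3 → ℤ)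
      - 2 * N 3 (![4,3,2] : Fin 3 → ℤ) - N 3 (![2,1,0] : Fin 3 → ℤ)
      + N 3 (![4,1,0] : Fin 3 → ℤ) := by
  have hA := Nmul ![4,2,0]
  have hB := Nmul ![7,2,0]
  have hC := Nmul ![5,4,0]
  have hCc := Nmul ![4,3,2]
  have hD := Nmul ![2,1,0]
  have hF := Nmul ![4,1,0]
  norm_num [Matrix.cons_val_zero, Matrix.cons_val_one, Matrix.head_cons,
    Matrix.cons_val_two, Matrix.tail_cons, zpow_ofNat] at hA hB hC hCc hD hF
  apply mul_right_cancel₀ (show ((X 0*X 1*X 2):K 3)^10 ≠ 0 from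
    pow_ne_zero _ (mul_ne_zero (mul_ne_zero (hX 0) (hX 1)) (hX 2)))
  linear_combination (N 3 (![4,2,0] : Fin 3 → ℤ) * (X 0^7*X 1^7*X 2^7)) * hp3
    + ((X 0^6+1)*X 1^3*X 2^3 + X 0^3*((X 1^6+1)*X 2^3) + X 0^3*(X 1^3*(X 2^6+1))) * hA
    - (X 0^3*X 1^3*X 2^3) * hB + (X 0^3*X 1^3*X 2^3) * hC
    + 2*(X 0^3*X 1^3*X 2^3) * hCc + (X 0^3*X 1^3*X 2^3) * hD
    - (X 0^3*X 1^3*X 2^3) * hF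
set_option maxHeartbeats 4000000 in
set_option synthInstance.maxHeartbeats 1000000 in
/-- `p̄_3 · oe_{(2,1)} = oe_{(5,1)} - oe_{(3,3)} - oe_{(2,2,2)} - oe_∅ + oe_{(2)}`
in three variables. -/
theorem pbar3_oe21 :
    pbar 3 3 * oe 3 (P3 2 1 0 (by norm_num) (by norm_num)) =
      oe 3 (P3 5 1 0 (by norm_num) (by norm_num))
        - oe 3 (P3 3 3 0 (by norm_num) (by norm_num))
        - oe 3 (P3 2 2 2 (by norm_num) (by norm_num))
        - oe 3 (P3 0 0 0 (by norm_num) (by norm_num))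
        + oe 3 (P3 2 0 0 (by norm_num) (by norm_num)) := by
  rw [oe_eq 2 1 0 (by norm_num) (by norm_num) ![4,2,0] (by norm_num) (by norm_num) (by rfl),
    oe_eq 5 1 0 (by norm_num) (by norm_num) ![7,2,0] (by norm_num) (by norm_num) (by rfl),
    oe_eq 3 3 0 (by norm_num) (by norm_num) ![5,4,0] (by norm_num) (by norm_num) (by rfl),
    oe_eq 2 2 2 (by norm_num) (by norm_num) ![4,3,2] (by norm_num) (by norm_num) (by rfl),
    oe_eq 0 0 0 (by norm_num) (by norm_num) ![2,1,0] (by norm_num) (by norm_num) (by rfl),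
    oe_eq 2 0 0 (by norm_num) (by norm_num) ![4,1,0] (by norm_num) (by norm_num) (by rfl),
    denN]
  norm_num
  field_simp [hDne]
  linear_combination key
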